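/- Let d_β(1) = t_1⋯t_{m−1}1 be the Rényi expansion of 1 for a simple Parry number β, with m ≥ 2. Suppose the word t_1⋯t_{m−1} has a non-empty proper border p (a word that is both a proper prefix and a proper suffix) and that t_1⋯t_{m−1} is not an integer power of any word. Then there exist words p', q over the digit alphabet and r ≥ 1 such that d_β(1) = p^r p' q p 1, where p' is a proper prefix of p with |p'| < |p|, q is non-empty, and the first letter q_1 of q satisfies q_1 < p_{|p'|+1}. -/

import Mathlib

private lemma suffix_eq_of_length {x y l : List ℕ} (hx : x <:+ l) (hy : y <:+ l)
    (h : x.length = y.length) : x = y := by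
  rw [List.suffix_iff_eq_drop] at hx hy
  rw [hx, hy, h]

private lemma flatten_replicate_length (r : ℕ) (p : List ℕ) :
    ((List.replicate r p).flatten).length = r * p.length := by
  induction r with
  | zero => simp
  | succ r ih => simp [List.replicate_succ, ih, Nat.succ_mul]; omega

private lemma flatten_replicate_succ' (r : ℕ) (p : List ℕ) :
    (List.replicate (r+1) p).flatten = (List.replicate r p).flatten ++ p := by
  rw [List.replicate_succ']
  simp

private lemma lex_mismatch : ∀ (j : ℕ) (x y : List ℕ) (hx : j < x.length) (hy : j < y.length),
    x.take j = y.take j → x[j] ≠ y[j] → (List.Lex (· < ·) x y ↔ x[j] < y[j])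
  | j, [], y, hx, hy, ht, hne => by simp at hx
  | j, a::x', [], hx, hy, ht, hne => by simp at hy
  | 0, a::x', b::y', hx, hy, ht, hne => by
      simp only [List.getElem_cons_zero] at hne ⊢
      constructor
      · intro h
        cases h with
        | rel h => exact h
        | cons h => exact absurd rfl hne
      · exact fun h => List.Lex.rel h
  | (j+1), a::x', b::y', hx, hy, ht, hne => by
      simp only [List.take_succ_cons, List.cons.injEq] at ht
      obtain ⟨rfl, ht'⟩ := ht
      simp only [List.getElem_cons_succ] at hne ⊢
      rw [List.lex_cons_iff]
      exact lex_mismatch j x' y' (by simpa using hx) (by simpa using hy) ht' hne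

/-- Let `d_β(1) = t_1⋯t_{m−1}1` satisfy the Parry condition. If `T = t_1⋯t_{m−1}`
has a shortest non-empty proper border `p` and `T` is not an integer power of any
word, then `d_β(1) = p^r p' q p 1` with `r ≥ 1`, `p'` a proper prefix of `p`,
`q` non-empty, and the first letter of `q` smaller than `p_{|p'|+1}`. -/
theorem stmt_18 (m : ℕ) (hm : 2 ≤ m) (T : List ℕ) (hT : T.length = m - 1)
    (D : List ℕ) (hD : D = T ++ [1])
    (hParry : ∀ i : ℕ, 1 ≤ i → i < D.length → List.Lex (· < ·) (D.drop i) D)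
    (p : List ℕ) (hp : p ≠ []) (hpp : p <+: T) (hps : p <:+ T) (hplt : p.length < T.length)
    (hmin : ∀ q : List ℕ, q ≠ [] → q <+: T → q <:+ T → q.length < T.length →
      p.length ≤ q.length)
    (hnp : ¬ ∃ (w : List ℕ) (k : ℕ), 2 ≤ k ∧ T = (List.replicate k w).flatten) :
    ∃ (r : ℕ) (p' q : List ℕ), 1 ≤ r ∧ p' <+: p ∧ p'.length < p.length ∧ q ≠ [] ∧
      D = (List.replicate r p).flatten ++ p' ++ q ++ p ++ [1] ∧
      q.headI < p.getD p'.length 0 := by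
  subst hD
  set n := T.length with hn
  set L := p.length with hLdef
  have hL1 : 1 ≤ L := List.length_pos_iff.mpr hp
  have hLn : L < n := hplt
  classical
  -- maximal power of p prefixing T
  set P : ℕ → Prop := fun r => (List.replicate r p).flatten <+: T with hPdef
  have hP1 : P 1 := by simpa [hPdef] using hpp
  have h1n : 1 ≤ n := by omega
  set r : ℕ := Nat.findGreatest P n with hrdef
  have hPr : P r := Nat.findGreatest_spec h1n hP1
  have hr1 : 1 ≤ r := Nat.le_findGreatest h1n hP1
  have hlenP : ∀ k, P k → k * L ≤ n := by
    intro k hk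
    have := hk.length_le
    rwa [flatten_replicate_length] at this
  have hrLn : r * L ≤ n := hlenP r hPr
  have hnotsucc : ¬ P (r + 1) := by
    intro h
    have hle : (r + 1) * L ≤ n := hlenP _ h
    have h2 : r + 1 ≤ (r + 1) * L := Nat.le_mul_of_pos_right _ hL1
    exact Nat.findGreatest_is_greatest (Nat.lt_succ_self r) (by omega) h
  set F := (List.replicate r p).flatten with hFdef
  have hFlen : F.length = r * L := flatten_replicate_length r p
  set w : List ℕ := T.drop (r * L) with hwdef
  have hw : T = F ++ w := by
    have h1 : F = T.take F.length := List.prefix_iff_eq_take.mp hPr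
    conv_lhs => rw [← List.take_append_drop F.length T]
    rw [← h1, hFlen, ← hwdef]
  have hwlen : w.length = n - r * L := by rw [hwdef]; simp [hn]
  have hwsuf : w <:+ T := ⟨F, hw.symm⟩
  have hpw : ¬ p <+: w := by
    intro h
    apply hnotsucc
    show (List.replicate (r+1) p).flatten <+: T
    rw [flatten_replicate_succ', hw]
    exact (List.prefix_append_right_inj F).mpr h
  -- w is nonempty
  have hwne : w ≠ [] := by
    intro hnil
    apply hnp
    refine ⟨p, r, ?_, ?_⟩
    · by_contra hr2
      have : r ≤ 1 := by omega
      have : r * L ≤ L := by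
        calc r * L ≤ 1 * L := Nat.mul_le_mul_right _ this
        _ = L := one_mul L
      have hwl : w.length = 0 := by rw [hnil]; rfl
      omega
    · rw [hw, hnil, List.append_nil]
  have hwpos : 1 ≤ w.length := List.length_pos_iff.mpr hwne
  -- suffix of p of suffix of F
  have hpsufF : p <:+ F := by
    obtain ⟨r', hr'⟩ : ∃ r', r = r' + 1 := ⟨r - 1, by omega⟩
    rw [hFdef, hr', flatten_replicate_succ']
    exact List.suffix_append _ _
  rcases lt_trichotomy w.length L with hcase | hcase | hcase
  · -- |w| < L : contradiction with minimality of border p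
    exfalso
    set u : List ℕ := p.drop w.length with hudef
    have hulen : u.length = L - w.length := by rw [hudef]; simp [hLdef]
    have husuf : u <:+ p := List.drop_suffix _ _
    have huwsuf : u ++ w <:+ T := by
      obtain ⟨z, hz⟩ := husuf.trans hpsufF
      exact ⟨z, by rw [hw, ← hz, List.append_assoc]⟩
    have heq : p = u ++ w := by
      apply suffix_eq_of_length hps huwsuf
      simp [hulen]; omega
    have hupre : u <+: p := ⟨w, heq.symm⟩
    have hune : u ≠ [] := by
      intro h
      have : u.length = 0 := by rw [h]; rfl
      omega
    have := hmin u hune (hupre.trans hpp) (husuf.trans hps) (by omega)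
    omega
  · -- |w| = L : w = p, contradicting maximality of r
    exfalso
    have : w = p := suffix_eq_of_length hwsuf hps (by omega)
    apply hnotsucc
    show (List.replicate (r+1) p).flatten <+: T
    rw [flatten_replicate_succ', hw, this]
  · -- main case |w| > L
    set s : ℕ := w.length - L with hsdef
    have hs1 : 1 ≤ s := by omega
    have hsw : s ≤ w.length := by omega
    have hwp : w.drop s = p := by
      apply suffix_eq_of_length ((List.drop_suffix s w).trans hwsuf) hps
      simp; omega
    -- longest common prefix length k of w and p
    set Q : ℕ → Prop := fun k => w.take k = p.take k with hQdef
    have hQ0 : Q 0 := by simp [hQdef]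
    set k : ℕ := Nat.findGreatest Q L with hkdef
    have hQk : Q k := Nat.findGreatest_spec (Nat.zero_le L) hQ0
    have hkL : k ≤ L := Nat.findGreatest_le L
    have hkLlt : k < L := by
      rcases lt_or_eq_of_le hkL with h | h
      · exact h
      exfalso
      apply hpw
      rw [List.prefix_iff_eq_take]
      have hq : w.take L = p.take L := by rw [← h]; exact hQk
      rw [show p.length = L from hLdef.symm, hq, hLdef, List.take_length]
    have hkw : k < w.length := by omega
    have hnotQ : ¬ Q (k + 1) :=
      Nat.findGreatest_is_greatest (by rw [← hkdef]; omega) (by omega)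
    have hQk' : w.take k = p.take k := hQk
    have hne : w[k]'hkw ≠ p[k]'hkLlt := by
      intro h
      apply hnotQ
      show w.take (k+1) = p.take (k+1)
      rw [← List.take_concat_get hkw, ← List.take_concat_get hkLlt, hQk', h]
    have htakeT : T.take k = p.take k := by
      obtain ⟨t2, ht2⟩ := hpp
      rw [← ht2, List.take_append_of_le_length (le_of_lt hkLlt)]
    -- Parry condition at position r*L : gives w[k] < p[k]
    have hdropD : (T ++ [1]).drop (r*L) = w ++ [1] := by
      rw [hw, List.append_assoc, ← hFlen, List.drop_left]
    have hrl1 : 1 ≤ r * L := by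
      have := Nat.mul_le_mul hr1 hL1
      simpa using this
    have hlex1 := hParry (r*L) hrl1 (by rw [List.length_append]; simp; omega)
    rw [hdropD] at hlex1
    have hx1 : k < (w ++ [1]).length := by simp; omega
    have hy1 : k < (T ++ [1]).length := by simp; omega
    have htakew : (w ++ [1]).take k = (T ++ [1]).take k := by
      rw [List.take_append_of_le_length (le_of_lt hkw),
        List.take_append_of_le_length (show k ≤ T.length by omega), hQk', htakeT]
    have hgx : (w ++ [1])[k]'hx1 = w[k]'hkw := List.getElem_append_left hkw
    have hgy : (T ++ [1])[k]'hy1 = p[k]'hkLlt := by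
      rw [List.getElem_append_left (show k < T.length by omega)]
      exact (hpp.getElem hkLlt).symm
    have hwk_lt : w[k]'hkw < p[k]'hkLlt := by
      have h := (lex_mismatch k _ _ hx1 hy1 htakew (by rw [hgx, hgy]; exact hne)).mp hlex1
      rwa [hgx, hgy] at h
    -- k < s
    have hks : k < s := by
      by_contra hsk
      push_neg at hsk
      have hwts : w.take s = p.take s := by
        have h1 : (w.take k).take s = (p.take k).take s := by rw [hQk']
        rwa [List.take_take, List.take_take, inf_eq_left.mpr hsk] at h1
      have hwfact : w = p.take s ++ p := by
        conv_lhs => rw [← List.take_append_drop s w]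
        rw [hwp, hwts]
      have hlenps : (p.take s).length = s := by rw [List.length_take]; omega
      have hper : ∀ i, i < k - s → p.getD (s+i) 0 = p.getD i 0 := by
        intro i hi
        have hb1 : s + i < w.length := by omega
        have hb2 : s + i < p.length := by omega
        have hbi : i < p.length := by omega
        rw [List.getD_eq_getElem p 0 hb2, List.getD_eq_getElem p 0 hbi]
        have h1 : w[s+i]'hb1 = p[s+i]'hb2 := by
          have e : (w.take k)[s+i]'(by rw [List.length_take]; omega)
              = (p.take k)[s+i]'(by rw [List.length_take]; omega) := by
            simp only [hQk']
          rwa [List.getElem_take, List.getElem_take] at e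
        have h2 : w[s+i]'hb1 = p[i]'hbi := by
          rw [List.getElem_of_eq hwfact hb1,
            List.getElem_append_right (by rw [hlenps]; omega)]
          simp only [hlenps, Nat.add_sub_cancel_left]
        rw [← h1, h2]
      have hbk : k - s < p.length := by omega
      have hwkps : w[k]'hkw = p[k-s]'hbk := by
        rw [List.getElem_of_eq hwfact hkw,
          List.getElem_append_right (by rw [hlenps]; omega)]
        simp only [hlenps]
      have hlex2 := hParry s (by omega) (by rw [List.length_append]; simp; omega)
      have hjx : k - s < ((T ++ [1]).drop s).length := by
        rw [List.length_drop, List.length_append]; simp; omega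
      have hjy : k - s < (T ++ [1]).length := by simp; omega
      have hgx2 : ((T ++ [1]).drop s)[k-s]'hjx = p[k]'hkLlt := by
        rw [List.getElem_drop]
        simp only [show s + (k - s) = k from by omega]
        rw [List.getElem_append_left (show k < T.length by omega)]
        exact (hpp.getElem hkLlt).symm
      have hgy2 : (T ++ [1])[k-s]'hjy = p[k-s]'hbk := by
        rw [List.getElem_append_left (show k - s < T.length by omega)]
        exact (hpp.getElem (show k - s < p.length by omega)).symm
      have hneq2 : ((T ++ [1]).drop s)[k-s]'hjx ≠ (T ++ [1])[k-s]'hjy := by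
        rw [hgx2, hgy2]
        intro h
        rw [← hwkps] at h
        exact absurd h.symm (ne_of_lt hwk_lt)
      have htake2 : ((T ++ [1]).drop s).take (k-s) = (T ++ [1]).take (k-s) := by
        apply List.ext_getElem
        · rw [List.length_take, List.length_take, List.length_drop,
            List.length_append]; simp; omega
        intro i h1 h2
        rw [List.getElem_take, List.getElem_take, List.getElem_drop]
        have hi : i < k - s := by
          rw [List.length_take] at h1
          omega
        rw [List.getElem_append_left (show s + i < T.length by omega),
          List.getElem_append_left (show i < T.length by omega),
          ← hpp.getElem (show s + i < p.length by omega),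
          ← hpp.getElem (show i < p.length by omega),
          ← List.getD_eq_getElem p 0 (show s + i < p.length by omega),
          ← List.getD_eq_getElem p 0 (show i < p.length by omega)]
        exact hper i hi
      have h := (lex_mismatch (k-s) _ _ hjx hjy htake2 hneq2).mp hlex2
      rw [hgx2, hgy2, ← hwkps] at h
      exact absurd h (not_lt.mpr (le_of_lt hwk_lt))
    -- conclusion
    have hkts : k < (w.take s).length := by rw [List.length_take]; omega
    have hwsplit : w = w.take k ++ (w.take s).drop k ++ p := by
      conv_lhs => rw [← List.take_append_drop s w]
      rw [hwp]
      congr 1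
      conv_lhs => rw [← List.take_append_drop k (w.take s)]
      rw [List.take_take, min_eq_left (le_of_lt hks)]
    refine ⟨r, w.take k, (w.take s).drop k, hr1, ?_, ?_, ?_, ?_, ?_⟩
    · rw [hQk']
      exact List.take_prefix k p
    · rw [List.length_take]
      omega
    · apply List.ne_nil_of_length_pos
      rw [List.length_drop, List.length_take]
      omega
    · conv_lhs => rw [hw, hwsplit]
      rw [hFdef]
      simp [List.append_assoc]
    · have hq : ((w.take s).drop k).headI = w[k]'hkw := by
        rw [List.drop_eq_getElem_cons hkts]
        show (w.take s)[k]'hkts = _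
        exact List.getElem_take
      rw [hq, List.getD_eq_getElem p 0
        (show (w.take k).length < p.length by rw [List.length_take]; omega)]
      have hlk : (w.take k).length = k := by rw [List.length_take]; omega
      simp only [hlk]
      exact hwk_lt
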